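/- Let A^(1),…,A^(n) be POVMs on ℂ^d with finite outcome sets Ω_1,…,Ω_n. If there exist k POVMs B^(1),…,B^(k) on ℂ^d with a common finite outcome set Ω such that each A^(i) is simulable from {B^(1),…,B^(k)} (i.e., for each i there is a probability distribution (p^(i)_j)_{j=1}^k and a stochastic matrix ν^(i) with A^(i)(y) = ∑_{j=1}^k ∑_{x∈Ω} p^(i)_j ν^(i)_{(j,x)y} B^(j)(x) for all y ∈ Ω_i), then A^(1),…,A^(n) are k-compatible: there exists a POVM G on the k-fold tensor power (ℂ^d)^{⊗k} with finite outcome set Ω₀ and, for each i, a stochastic matrix μ^(i) from Ω₀ to Ω_i such that ∑_{z∈Ω₀} μ^(i)_{z y} Tr[G(z) ρ^{⊗k}] = Tr[A^(i)(y) ρ] for every density matrix ρ on ℂ^d, every y ∈ Ω_i, and every i = 1,…,n. -/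

import Mathlib

open scoped BigOperators ComplexOrder

/-- A POVM on the Hilbert space with orthonormal basis indexed by `ι`, with finite
outcome set `Ω`: a family of positive semidefinite matrices summing to the identity. -/
structure POVM (ι : Type*) [Fintype ι] [DecidableEq ι] (Ω : Type*) [Fintype Ω] where
  M : Ω → Matrix ι ι ℂ
  posSemidef : ∀ x, (M x).PosSemidef
  sum_eq_one : ∑ x, M x = 1

/-- The `k`-fold tensor (Kronecker) power of a matrix on `ℂ^d`, a matrix on
`(ℂ^d)^{⊗k}` (whose basis is indexed by `Fin k → Fin d`). -/
def kronPow {d : ℕ} (k : ℕ) (ρ : Matrix (Fin d) (Fin d) ℂ) :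
    Matrix (Fin k → Fin d) (Fin k → Fin d) ℂ :=
  Matrix.of fun f g => ∏ j, ρ (f j) (g j)

open Matrix

def tens {d k : ℕ} (C : Fin k → Matrix (Fin d) (Fin d) ℂ) :
    Matrix (Fin k → Fin d) (Fin k → Fin d) ℂ :=
  Matrix.of fun a b => ∏ j, C j (a j) (b j)

lemma tens_mul {d k : ℕ} (C E : Fin k → Matrix (Fin d) (Fin d) ℂ) :
    tens C * tens E = tens (fun j => C j * E j) := by
  ext a b
  simp only [tens, Matrix.mul_apply, Matrix.of_apply, ← Finset.prod_mul_distrib]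
  exact (Fintype.prod_sum (fun j x => C j (a j) x * E j x (b j))).symm

lemma tens_conjT {d k : ℕ} (C : Fin k → Matrix (Fin d) (Fin d) ℂ) :
    (tens C)ᴴ = tens (fun j => (C j)ᴴ) := by
  ext a b
  simp only [tens, Matrix.conjTranspose_apply, Matrix.of_apply]
  exact star_prod _ _

lemma tens_posSemidef {d k : ℕ} (C : Fin k → Matrix (Fin d) (Fin d) ℂ)
    (h : ∀ j, (C j).PosSemidef) : (tens C).PosSemidef := by
  choose D hD using fun j => (by open scoped MatrixOrder Matrix.Norms.L2Operator in obtain ⟨B, hB⟩ := CStarAlgebra.nonneg_iff_eq_star_mul_self.mp (h j).nonneg; exact ⟨B, hB⟩ : ∃ B : Matrix (Fin d) (Fin d) ℂ, C j = Bᴴ * B)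
  have : tens C = (tens D)ᴴ * tens D := by
    rw [tens_conjT, tens_mul]
    unfold tens; congr 1; funext a b; exact Finset.prod_congr rfl fun j _ => by rw [hD j]
  rw [this]
  exact Matrix.posSemidef_conjTranspose_mul_self _

lemma tens_trace_mul {d k : ℕ} (C : Fin k → Matrix (Fin d) (Fin d) ℂ)
    (ρ : Matrix (Fin d) (Fin d) ℂ) :
    (tens C * kronPow k ρ).trace = ∏ j, (C j * ρ).trace := by
  simp only [Matrix.trace, Matrix.diag, Matrix.mul_apply, tens, kronPow, Matrix.of_apply]
  have h1 : ∀ a : Fin k → Fin d,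
      ∑ b : Fin k → Fin d, (∏ j, C j (a j) (b j)) * ∏ j, ρ (b j) (a j)
        = ∏ j, ∑ y, C j (a j) y * ρ y (a j) := by
    intro a
    simp only [← Finset.prod_mul_distrib]
    exact (Fintype.prod_sum (fun j y => C j (a j) y * ρ y (a j))).symm
  rw [Finset.sum_congr rfl fun a _ => h1 a]
  exact (Fintype.prod_sum (fun j x => ∑ y, C j x y * ρ y x)).symm

lemma tens_sum_eq_one {d k t : ℕ} (B : Fin k → POVM (Fin d) (Fin t)) :
    ∑ f : Fin k → Fin t, tens (fun j => (B j).M (f j)) = 1 := by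
  ext a b
  simp only [Matrix.sum_apply, tens, Matrix.of_apply]
  rw [← Fintype.prod_sum (fun j x => (B j).M x (a j) (b j))]
  have h : ∀ j, ∑ x, (B j).M x (a j) (b j) = (1 : Matrix (Fin d) (Fin d) ℂ) (a j) (b j) := by
    intro j
    rw [← Matrix.sum_apply, (B j).sum_eq_one]
  rw [Finset.prod_congr rfl fun j _ => h j]
  by_cases hab : a = b
  · simp [hab, Matrix.one_apply]
  · obtain ⟨j0, hj0⟩ := Function.ne_iff.mp hab
    rw [Matrix.one_apply_ne hab, Finset.prod_eq_zero (Finset.mem_univ j0)]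
    simp [Matrix.one_apply_ne hj0]

lemma key_sum {k t : ℕ} (T : Fin k → Fin t → ℂ) (hT : ∀ j', ∑ x, T j' x = 1)
    (j : Fin k) (w : Fin t → ℂ) :
    ∑ f : Fin k → Fin t, w (f j) * ∏ j', T j' (f j') = ∑ x, w x * T j x := by
  have h1 : ∀ f : Fin k → Fin t,
      w (f j) * ∏ j', T j' (f j')
        = ∏ j', ((if j' = j then w (f j') else 1) * T j' (f j')) := by
    intro f
    rw [Finset.prod_mul_distrib, Finset.prod_ite_eq' Finset.univ j (fun j' => w (f j'))]
    simp
  rw [Finset.sum_congr rfl fun f _ => h1 f,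
    ← Fintype.prod_sum (fun j' x => (if j' = j then w x else 1) * T j' x)]
  have h2 : ∀ j', (∑ x, (if j' = j then w x else 1) * T j' x)
      = if j' = j then ∑ x, w x * T j' x else 1 := by
    intro j'
    by_cases h : j' = j <;> simp [h, hT]
  rw [Finset.prod_congr rfl fun j' _ => h2 j',
    Finset.prod_ite_eq' Finset.univ j (fun j' => ∑ x, w x * T j' x)]
  simp

/-- POVMs `A⁽¹⁾,…,A⁽ⁿ⁾` that are simulable from `k` POVMs
`B⁽¹⁾,…,B⁽ᵏ⁾` are `k`-compatible: there are a POVM `G` on the `k`-fold tensor power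
and stochastic postprocessings `μ⁽ⁱ⁾` reproducing the statistics of each `A⁽ⁱ⁾` on
`ρ^{⊗k}` for every density matrix `ρ`. -/
theorem statement11 (d n k : ℕ) (o : Fin n → ℕ) (t : ℕ)
    (A : (i : Fin n) → POVM (Fin d) (Fin (o i)))
    (B : Fin k → POVM (Fin d) (Fin t))
    (hsim : ∀ i : Fin n, ∃ (p : Fin k → ℝ) (ν : Fin k → Fin t → Fin (o i) → ℝ),
      (∀ j, 0 ≤ p j) ∧ (∑ j, p j = 1) ∧
      (∀ j x y, 0 ≤ ν j x y) ∧ (∀ j x, ∑ y, ν j x y = 1) ∧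
      ∀ y, (A i).M y = ∑ j, ∑ x, ((p j * ν j x y : ℝ) : ℂ) • (B j).M x) :
    ∃ (r : ℕ) (G : POVM (Fin k → Fin d) (Fin r))
      (μ : (i : Fin n) → Fin r → Fin (o i) → ℝ),
      (∀ i z y, 0 ≤ μ i z y) ∧ (∀ i z, ∑ y, μ i z y = 1) ∧
      ∀ ρ : Matrix (Fin d) (Fin d) ℂ, ρ.PosSemidef → ρ.trace = 1 →
        ∀ (i : Fin n) (y : Fin (o i)),
          ∑ z, ((μ i z y : ℝ) : ℂ) * (G.M z * kronPow k ρ).trace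
            = ((A i).M y * ρ).trace := by
  choose p ν hp hps hν hνs hA using hsim
  set e : (Fin k → Fin t) ≃ Fin (t ^ k) := finFunctionFinEquiv
  refine ⟨t ^ k,
    { M := fun z => tens (fun j => (B j).M (e.symm z j))
      posSemidef := fun z => tens_posSemidef _ (fun j => (B j).posSemidef _)
      sum_eq_one := by
        rw [Fintype.sum_equiv e.symm _ (fun f => tens fun j => (B j).M (f j)) (fun z => rfl)]
        exact tens_sum_eq_one B },
    fun i z y => ∑ j, p i j * ν i j (e.symm z j) y, ?_, ?_, ?_⟩
  · intro i z y
    exact Finset.sum_nonneg fun j _ => mul_nonneg (hp i j) (hν i j _ y)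
  · intro i z
    rw [Finset.sum_comm]
    simp only [← Finset.mul_sum, hνs, mul_one]
    exact hps i
  · intro ρ hρ hρtr i y
    have hT : ∀ j', ∑ x, ((B j').M x * ρ).trace = 1 := by
      intro j'
      rw [← Matrix.trace_sum, ← Finset.sum_mul, (B j').sum_eq_one, Matrix.one_mul, hρtr]
    have hL : ∑ z, ((∑ j, p i j * ν i j (e.symm z j) y : ℝ) : ℂ)
          * (tens (fun j => (B j).M (e.symm z j)) * kronPow k ρ).trace
        = ∑ f : Fin k → Fin t, ((∑ j, p i j * ν i j (f j) y : ℝ) : ℂ)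
          * (tens (fun j => (B j).M (f j)) * kronPow k ρ).trace :=
      (Equiv.sum_comp e.symm (fun f => ((∑ j, p i j * ν i j (f j) y : ℝ) : ℂ)
          * (tens (fun j => (B j).M (f j)) * kronPow k ρ).trace)).symm ▸ rfl
    rw [hL]
    have step : ∑ f : Fin k → Fin t, ((∑ j, p i j * ν i j (f j) y : ℝ) : ℂ)
          * (tens (fun j => (B j).M (f j)) * kronPow k ρ).trace
        = ∑ j, (p i j : ℂ) * ∑ x, (ν i j x y : ℂ) * ((B j).M x * ρ).trace := by
      have : ∀ f : Fin k → Fin t, ((∑ j, p i j * ν i j (f j) y : ℝ) : ℂ)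
            * (tens (fun j => (B j).M (f j)) * kronPow k ρ).trace
          = ∑ j, (p i j : ℂ) * ((ν i j (f j) y : ℂ) * ∏ j', ((B j').M (f j') * ρ).trace) := by
        intro f
        rw [tens_trace_mul]
        push_cast
        rw [Finset.sum_mul]
        exact Finset.sum_congr rfl fun j _ => by ring
      rw [Finset.sum_congr rfl fun f _ => this f, Finset.sum_comm]
      refine Finset.sum_congr rfl fun j _ => ?_
      rw [← Finset.mul_sum, key_sum (fun j' x => ((B j').M x * ρ).trace) hT j
        (fun x => (ν i j x y : ℂ))]
    rw [step, hA i y]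
    simp only [Matrix.sum_mul, Matrix.smul_mul, Matrix.trace_sum, Matrix.trace_smul,
      smul_eq_mul]
    push_cast
    refine Finset.sum_congr rfl fun j _ => ?_
    rw [Finset.mul_sum]
    exact Finset.sum_congr rfl fun x _ => by ring
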